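/- Let C₀ > 0 and let (t_i) be a sequence of positive real numbers with t_i → ∞. For each i let λ₁(i) ≤ λ₂(i) ≤ λ₃(i) be real numbers and set K_i = √(λ₁(i)² + λ₂(i)² + λ₃(i)²). Assume: (a) for every i with λ₁(i) < 0 one has λ₁(i) + λ₂(i) + λ₃(i) ≥ −λ₁(i)·(log(−λ₁(i)) + log(1 + C₀·t_i) − log C₀ − 3); and (b) t_i·K_i → ∞ as i → ∞. Then λ₃(i) > 0 for all sufficiently large i, and min(λ₁(i), 0)/λ₃(i) → 0 as i → ∞. -/

import Mathlib

private lemma log_chain (C₀ T a c : ℝ) (hC₀ : 0 < C₀) (hT : 0 < T) (ha : 0 < a)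
    (h : Real.log a + Real.log (1 + C₀ * T) - Real.log C₀ - 3 ≤ c) :
    a * T ≤ Real.exp (c + 3) := by
  have h1 : (0:ℝ) < 1 + C₀ * T := by positivity
  have h2 : Real.log (a * (1 + C₀ * T)) ≤ Real.log C₀ + (c + 3) := by
    rw [Real.log_mul ha.ne' h1.ne']; linarith
  have h3 : a * (1 + C₀ * T) ≤ C₀ * Real.exp (c + 3) := by
    have := Real.exp_le_exp.mpr h2
    rwa [Real.exp_log (by positivity), Real.exp_add, Real.exp_log hC₀] at this
  nlinarith

private lemma sqrt_three_bound (x y z m : ℝ) (hm : 0 ≤ m)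
    (hx : x ^ 2 ≤ m ^ 2) (hy : y ^ 2 ≤ m ^ 2) (hz : z ^ 2 ≤ m ^ 2) :
    Real.sqrt (x ^ 2 + y ^ 2 + z ^ 2) ≤ Real.sqrt 3 * m := by
  have h : Real.sqrt (x ^ 2 + y ^ 2 + z ^ 2) ≤ Real.sqrt (3 * m ^ 2) :=
    Real.sqrt_le_sqrt (by linarith)
  rwa [Real.sqrt_mul (by norm_num : (0:ℝ) ≤ 3), Real.sqrt_sq hm] at h

/-- A Type IIb-like sequence satisfying Hamilton's pinching estimate
has almost nonnegative sectional curvatures. -/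
theorem type_IIb_almost_nonneg_sectional_curvature
    (C₀ : ℝ) (hC₀ : 0 < C₀)
    (t : ℕ → ℝ) (ht : ∀ i, 0 < t i)
    (htt : Filter.Tendsto t Filter.atTop Filter.atTop)
    (l₁ l₂ l₃ : ℕ → ℝ) (h12 : ∀ i, l₁ i ≤ l₂ i) (h23 : ∀ i, l₂ i ≤ l₃ i)
    (K : ℕ → ℝ)
    (hK : ∀ i, K i = Real.sqrt ((l₁ i) ^ 2 + (l₂ i) ^ 2 + (l₃ i) ^ 2))
    (ha : ∀ i, l₁ i < 0 → l₁ i + l₂ i + l₃ i ≥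
      -l₁ i * (Real.log (-l₁ i) + Real.log (1 + C₀ * t i) - Real.log C₀ - 3))
    (hb : Filter.Tendsto (fun i => t i * K i) Filter.atTop Filter.atTop) :
    (∀ᶠ i in Filter.atTop, 0 < l₃ i) ∧
      Filter.Tendsto (fun i => min (l₁ i) 0 / l₃ i) Filter.atTop (nhds 0) := by
  -- the key quantitative estimate
  have key : ∀ ε : ℝ, 0 < ε → ε ≤ 1 → ∀ i,
      Real.sqrt 3 * Real.exp (3 + 2 / ε) / ε < t i * K i →
      0 < l₃ i ∧ |min (l₁ i) 0 / l₃ i| ≤ ε := by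
    intro ε hε hε1 i hi
    have hεinv : 1 ≤ 1 / ε := by rw [le_div_iff₀ hε]; linarith
    have hKnn : 0 ≤ K i := by rw [hK i]; exact Real.sqrt_nonneg _
    have hTi := ht i
    -- Step 1 : l₃ i > 0
    have h3pos : 0 < l₃ i := by
      by_contra h3
      push_neg at h3
      rcases lt_or_ge (l₁ i) 0 with h1neg | h1nn
      · -- pinching contradiction
        set a := -l₁ i with hadef
        clear_value a
        have hapos : 0 < a := by simp [hadef]; linarith
        have hR := ha i h1neg
        rw [← hadef] at hR
        -- R ≤ -a
        have hRle : l₁ i + l₂ i + l₃ i ≤ -a := by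
          have h2 : l₂ i ≤ 0 := le_trans (h23 i) h3
          simp only [hadef, neg_neg]; linarith
        have hB : Real.log a + Real.log (1 + C₀ * t i) - Real.log C₀ - 3 ≤ -1 := by
          have hmul : a * (Real.log a + Real.log (1 + C₀ * t i) - Real.log C₀ - 3)
              ≤ a * (-1) := by linarith [hR]
          exact (mul_le_mul_iff_right₀ hapos).mp hmul
        have hat : a * t i ≤ Real.exp (-1 + 3) :=
          log_chain C₀ (t i) a (-1) hC₀ hTi hapos hB
        -- K ≤ √3 a
        have hKle : K i ≤ Real.sqrt 3 * a := by
          rw [hK i]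
          apply sqrt_three_bound _ _ _ _ hapos.le
          · nlinarith
          · nlinarith [h12 i, le_trans (h23 i) h3]
          · nlinarith [le_trans (h12 i) (h23 i), h3]
        have hexp : Real.exp (-1 + 3) ≤ Real.exp (3 + 2 / ε) := by
          apply Real.exp_le_exp.mpr; linarith [div_nonneg (by norm_num : (0:ℝ) ≤ 2) hε.le]
        have hs3 : (0:ℝ) < Real.sqrt 3 := Real.sqrt_pos.mpr (by norm_num)
        have : t i * K i ≤ Real.sqrt 3 * Real.exp (3 + 2 / ε) / ε := by
          calc t i * K i ≤ t i * (Real.sqrt 3 * a) := by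
                exact mul_le_mul_of_nonneg_left hKle hTi.le
            _ = Real.sqrt 3 * (a * t i) := by ring
            _ ≤ Real.sqrt 3 * Real.exp (3 + 2 / ε) := by
                exact mul_le_mul_of_nonneg_left (le_trans hat hexp) hs3.le
            _ = Real.sqrt 3 * Real.exp (3 + 2 / ε) * 1 := (mul_one _).symm
            _ ≤ Real.sqrt 3 * Real.exp (3 + 2 / ε) * (1 / ε) := by
                apply mul_le_mul_of_nonneg_left hεinv; positivity
            _ = Real.sqrt 3 * Real.exp (3 + 2 / ε) / ε := by ring
        linarith
      · -- all eigenvalues are 0, so K = 0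
        have h1 : l₁ i = 0 := le_antisymm (le_trans (le_trans (h12 i) (h23 i)) h3) h1nn
        have h2 : l₂ i = 0 := le_antisymm (le_trans (h23 i) h3) (h1 ▸ h12 i)
        have h3' : l₃ i = 0 := le_antisymm h3 (h2 ▸ h23 i)
        have : K i = 0 := by rw [hK i, h1, h2, h3']; simp
        have hpos : 0 < Real.sqrt 3 * Real.exp (3 + 2 / ε) / ε := by positivity
        rw [this, mul_zero] at hi
        linarith
    refine ⟨h3pos, ?_⟩
    -- Step 2 : quotient bound
    rcases le_or_gt 0 (l₁ i) with h1nn | h1neg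
    · rw [min_eq_right h1nn, zero_div, abs_zero]; exact hε.le
    · set a := -l₁ i with hadef
      clear_value a
      have hapos : 0 < a := by simp [hadef]; linarith
      have hkey : a ≤ ε * l₃ i := by
        by_contra hcon
        push_neg at hcon
        -- bound on λ₃ and on K
        have h3lt : l₃ i < a / ε := by
          rw [lt_div_iff₀ hε]; linarith [mul_comm ε (l₃ i)]
        have ham : a ≤ a / ε := by
          rw [le_div_iff₀ hε]; nlinarith
        have hmnn : 0 ≤ a / ε := by positivity
        have hKle : K i ≤ Real.sqrt 3 * (a / ε) := by
          rw [hK i]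
          apply sqrt_three_bound _ _ _ _ hmnn
          · nlinarith
          · nlinarith [h12 i, h23 i]
          · nlinarith [le_trans (h12 i) (h23 i)]
        have hR := ha i h1neg
        rw [← hadef] at hR
        have hRle : l₁ i + l₂ i + l₃ i ≤ 2 * (a / ε) := by
          have := h23 i
          nlinarith
        have hB : Real.log a + Real.log (1 + C₀ * t i) - Real.log C₀ - 3 ≤ 2 / ε := by
          have hmul : a * (Real.log a + Real.log (1 + C₀ * t i) - Real.log C₀ - 3)
              ≤ a * (2 / ε) := by
            have : a * (2 / ε) = 2 * (a / ε) := by ring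
            rw [this]; linarith [hR, hRle]
          exact (mul_le_mul_iff_right₀ hapos).mp hmul
        have hat : a * t i ≤ Real.exp (2 / ε + 3) :=
          log_chain C₀ (t i) a (2 / ε) hC₀ hTi hapos hB
        have hs3 : (0:ℝ) ≤ Real.sqrt 3 := Real.sqrt_nonneg 3
        have : t i * K i ≤ Real.sqrt 3 * Real.exp (3 + 2 / ε) / ε := by
          calc t i * K i ≤ t i * (Real.sqrt 3 * (a / ε)) :=
                mul_le_mul_of_nonneg_left hKle hTi.le
            _ = Real.sqrt 3 * (a * t i) / ε := by ring
            _ ≤ Real.sqrt 3 * Real.exp (3 + 2 / ε) / ε := by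
                have h' : a * t i ≤ Real.exp (3 + 2 / ε) := by
                  rw [show (3:ℝ) + 2 / ε = 2 / ε + 3 by ring]; exact hat
                gcongr
        linarith
      rw [min_eq_left h1neg.le, abs_div, abs_of_neg h1neg, abs_of_pos h3pos,
        div_le_iff₀ h3pos]
      linarith [hkey]
  constructor
  · have := hb.eventually_gt_atTop (Real.sqrt 3 * Real.exp (3 + 2 / 1) / 1)
    filter_upwards [this] with i hi
    exact (key 1 one_pos le_rfl i hi).1
  · rw [NormedAddCommGroup.tendsto_nhds_zero]
    intro ε hε
    set ε' := min (ε / 2) 1 with hε'def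
    have hε'pos : 0 < ε' := lt_min (by linarith) one_pos
    have hε'1 : ε' ≤ 1 := min_le_right _ _
    have hε'lt : ε' < ε := lt_of_le_of_lt (min_le_left _ _) (by linarith)
    have := hb.eventually_gt_atTop (Real.sqrt 3 * Real.exp (3 + 2 / ε') / ε')
    filter_upwards [this] with i hi
    have h := (key ε' hε'pos hε'1 i hi).2
    calc ‖min (l₁ i) 0 / l₃ i‖ = |min (l₁ i) 0 / l₃ i| := rfl
      _ ≤ ε' := h
      _ < ε := hε'lt
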